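/- Let a1 < a2 < a3. With X,Y,p_X,p_Y coordinates on R^4 equipped with the canonical Poisson bracket ({X,p_X}=1, {Y,p_Y}=1, all other brackets of coordinates zero), define H = 2[X(1-X)p_X^2 - 2XY p_X p_Y + Y(1-Y)p_Y^2] + (1/2)(a1-a3)X + (1/2)(a2-a3)Y and H2 = 2(a1 p_Y^2 Y + a2 p_X^2 X)(X+Y-1) - 2 a3 X Y (p_Y - p_X)^2 - (1/2)a2(a1-a3)X - (1/2)a1(a2-a3)Y. Then {H, H2} = 0. -/

import Mathlib

/-- Phase space `ℝ⁴` with coordinates `(X, Y, p_X, p_Y)`. -/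
abbrev Phase : Type := ℝ × ℝ × ℝ × ℝ

/-- Canonical Poisson bracket on `ℝ⁴`:
`{F,G} = F_X G_{p_X} - F_{p_X} G_X + F_Y G_{p_Y} - F_{p_Y} G_Y`. -/
noncomputable def pbracket (F G : Phase → ℝ) (q : Phase) : ℝ :=
  fderiv ℝ F q (1, 0, 0, 0) * fderiv ℝ G q (0, 0, 1, 0)
    - fderiv ℝ F q (0, 0, 1, 0) * fderiv ℝ G q (1, 0, 0, 0)
    + fderiv ℝ F q (0, 1, 0, 0) * fderiv ℝ G q (0, 0, 0, 1)
    - fderiv ℝ F q (0, 0, 0, 1) * fderiv ℝ G q (0, 1, 0, 0)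

/-- The Neumann Hamiltonian and its second integral are in involution. -/
theorem neumann_hamiltonian_poisson_commutes_with_H2
    (a1 a2 a3 : ℝ) (h12 : a1 < a2) (h23 : a2 < a3)
    (H H2 : Phase → ℝ)
    (hH : ∀ q : Phase, H q =
      2 * (q.1 * (1 - q.1) * q.2.2.1 ^ 2 - 2 * q.1 * q.2.1 * q.2.2.1 * q.2.2.2
        + q.2.1 * (1 - q.2.1) * q.2.2.2 ^ 2)
      + (1 / 2) * (a1 - a3) * q.1 + (1 / 2) * (a2 - a3) * q.2.1)
    (hH2 : ∀ q : Phase, H2 q =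
      2 * (a1 * q.2.2.2 ^ 2 * q.2.1 + a2 * q.2.2.1 ^ 2 * q.1) * (q.1 + q.2.1 - 1)
      - 2 * a3 * q.1 * q.2.1 * (q.2.2.2 - q.2.2.1) ^ 2
      - (1 / 2) * a2 * (a1 - a3) * q.1 - (1 / 2) * a1 * (a2 - a3) * q.2.1) :
    ∀ q : Phase, pbracket H H2 q = 0 := by
  have hHe : H = fun q : Phase =>
      2 * (q.1 * (1 - q.1) * q.2.2.1 ^ 2 - 2 * q.1 * q.2.1 * q.2.2.1 * q.2.2.2
        + q.2.1 * (1 - q.2.1) * q.2.2.2 ^ 2)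
      + (1 / 2) * (a1 - a3) * q.1 + (1 / 2) * (a2 - a3) * q.2.1 := funext hH
  have hH2e : H2 = fun q : Phase =>
      2 * (a1 * q.2.2.2 ^ 2 * q.2.1 + a2 * q.2.2.1 ^ 2 * q.1) * (q.1 + q.2.1 - 1)
      - 2 * a3 * q.1 * q.2.1 * (q.2.2.2 - q.2.2.1) ^ 2
      - (1 / 2) * a2 * (a1 - a3) * q.1 - (1 / 2) * a1 * (a2 - a3) * q.2.1 := funext hH2
  subst hHe hH2e
  intro q
  have hx : HasFDerivAt (fun q : Phase => q.1)
      (ContinuousLinearMap.fst ℝ ℝ (ℝ × ℝ × ℝ)) q := hasFDerivAt_fst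
  have hy : HasFDerivAt (fun q : Phase => q.2.1)
      ((ContinuousLinearMap.fst ℝ ℝ (ℝ × ℝ)).comp
        (ContinuousLinearMap.snd ℝ ℝ (ℝ × ℝ × ℝ))) q :=
    hasFDerivAt_fst.comp q hasFDerivAt_snd
  have hpp : HasFDerivAt (fun q : Phase => q.2.2)
      ((ContinuousLinearMap.snd ℝ ℝ (ℝ × ℝ)).comp
        (ContinuousLinearMap.snd ℝ ℝ (ℝ × ℝ × ℝ))) q :=
    hasFDerivAt_snd.comp q hasFDerivAt_snd
  have hpx : HasFDerivAt (fun q : Phase => q.2.2.1)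
      ((ContinuousLinearMap.fst ℝ ℝ ℝ).comp
        ((ContinuousLinearMap.snd ℝ ℝ (ℝ × ℝ)).comp
          (ContinuousLinearMap.snd ℝ ℝ (ℝ × ℝ × ℝ)))) q :=
    hasFDerivAt_fst.comp q hpp
  have hpy : HasFDerivAt (fun q : Phase => q.2.2.2)
      ((ContinuousLinearMap.snd ℝ ℝ ℝ).comp
        ((ContinuousLinearMap.snd ℝ ℝ (ℝ × ℝ)).comp
          (ContinuousLinearMap.snd ℝ ℝ (ℝ × ℝ × ℝ)))) q :=
    hasFDerivAt_snd.comp q hpp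
  have hc1 : HasFDerivAt (fun _ : Phase => (1 : ℝ)) (0 : Phase →L[ℝ] ℝ) q := hasFDerivAt_const 1 q
  have hsq : ∀ {f : Phase → ℝ} {f' : Phase →L[ℝ] ℝ},
      HasFDerivAt f f' q → HasFDerivAt (fun x => f x ^ 2) (f q • f' + f q • f') q := by
    intro f f' h
    simpa only [pow_two, Pi.mul_def] using h.mul h
  have hHd := ((((((hx.mul (hc1.sub hx)).mul (hsq hpx)).sub
        ((((hx.const_mul 2).mul hy).mul hpx).mul hpy)).add
        ((hy.mul (hc1.sub hy)).mul (hsq hpy))).const_mul 2).add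
        (hx.const_mul ((1 / 2) * (a1 - a3)))).add
        (hy.const_mul ((1 / 2) * (a2 - a3)))
  have hH2d := (((((((hsq hpy).const_mul a1).mul hy).add
        (((hsq hpx).const_mul a2).mul hx)).const_mul 2).mul
        ((hx.add hy).sub_const 1)).sub
        (((hx.const_mul (2 * a3)).mul hy).mul (hsq (hpy.sub hpx)))).sub
        (hx.const_mul ((1 / 2) * a2 * (a1 - a3))) |>.sub
        (hy.const_mul ((1 / 2) * a1 * (a2 - a3)))
  simp only [Pi.mul_def, Pi.sub_def, Pi.add_def] at hHd hH2d
  rw [pbracket, hHd.fderiv, hH2d.fderiv]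
  simp only [ContinuousLinearMap.add_apply, ContinuousLinearMap.smul_apply,
    ContinuousLinearMap.sub_apply, ContinuousLinearMap.coe_comp',
    Function.comp_apply, ContinuousLinearMap.coe_fst', ContinuousLinearMap.coe_snd',
    ContinuousLinearMap.zero_apply, smul_eq_mul]
  ring
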